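/- Let k be an algebraically closed field, K a field extension of k, ν a valuation on K trivial on k with valuation ring R and maximal ideal m_R, and K' ⊆ K a subfield containing k with m_R ∩ K' ≠ {0}. Suppose f_1,...,f_r ∈ R ∩ K' are elements whose residues form a transcendence basis of (R ∩ K')/(m_R ∩ K') over k, and g_1,...,g_s ∈ R are elements such that the residues of f_1,...,f_r, g_1,...,g_s together are algebraically independent over k in R/m_R. Then g_1,...,g_s are algebraically independent over K'. -/

import Mathlib

open IsLocalRing


open Polynomial in
lemma helper1 {F : Type*} [Field F] (A : Type*) [CommRing A] [Algebra A F]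
    (hinj : Function.Injective (algebraMap A F)) (x : F) :
    IsAlgebraic A x ↔ ∃ p : F[X], p ≠ 0 ∧
      (∀ i, p.coeff i ∈ Set.range (algebraMap A F)) ∧ p.eval x = 0 := by
  constructor
  · rintro ⟨p, hp, hpx⟩
    refine ⟨p.map (algebraMap A F), fun h => hp ((Polynomial.map_injective _ hinj)
      (by simpa using h)), fun i => by rw [coeff_map]; exact ⟨_, rfl⟩, ?_⟩
    rwa [eval_map, ← Polynomial.aeval_def]
  · rintro ⟨q, hq, hmem, hqx⟩
    choose c hc using hmem
    set p : A[X] := ∑ i ∈ q.support, Polynomial.monomial i (c i) with hp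
    have hmap : p.map (algebraMap A F) = q := by
      rw [hp, Polynomial.map_sum]
      simp_rw [Polynomial.map_monomial, hc]
      exact (Polynomial.as_sum_support q).symm
    refine ⟨p, fun h => hq (by rw [← hmap, h, Polynomial.map_zero]), ?_⟩
    rw [Polynomial.aeval_def, ← Polynomial.eval_map, hmap]
    exact hqx

lemma transfer {F : Type*} [Field F] {A B : Type*} [CommRing A] [CommRing B]
    [Algebra A F] [Algebra B F]
    (hA : Function.Injective (algebraMap A F)) (hB : Function.Injective (algebraMap B F))
    (hsub : Set.range (algebraMap A F) ⊆ Set.range (algebraMap B F)) {x : F}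
    (h : IsAlgebraic A x) : IsAlgebraic B x := by
  rw [helper1 A hA] at h
  rw [helper1 B hB]
  obtain ⟨p, h1, h2, h3⟩ := h
  exact ⟨p, h1, fun i => hsub (h2 i), h3⟩

lemma range_subalg {F : Type*} [Field F] {k : Type*} [Field k] [Algebra k F]
    (B : Subalgebra k F) : Set.range (algebraMap ↥B F) = (B : Set F) :=
  Subtype.range_coe

lemma range_intfield {F : Type*} [Field F] {k : Type*} [Field k] [Algebra k F]
    (E : IntermediateField k F) : Set.range (algebraMap ↥E F) = (E : Set F) :=
  Subtype.range_coe

lemma frac {k F : Type*} [Field k] [Field F] [Algebra k F] (S : Set F) (x : F)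
    (h : IsAlgebraic ↥(IntermediateField.adjoin k S) x) :
    IsAlgebraic ↥(Algebra.adjoin k S) x := by
  have haux : ∀ t : MvPolynomial ↥S k, MvPolynomial.aeval (Subtype.val : S → F) t ∈
      Algebra.adjoin k S := by
    intro t
    have h2 : Algebra.adjoin k S = Algebra.adjoin k (Set.range (Subtype.val : S → F)) := by
      rw [Subtype.range_coe]
    rw [h2, Algebra.adjoin_range_eq_range_aeval]
    exact ⟨t, rfl⟩
  rw [helper1 _ (algebraMap ↥(IntermediateField.adjoin k S) F).injective] at h
  rw [helper1 _ (Subtype.val_injective : Function.Injective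
    (algebraMap ↥(Algebra.adjoin k S) F))]
  obtain ⟨q, hq0, hmem, hqx⟩ := h
  rw [range_intfield] at hmem
  have hmem' : ∀ i, ∃ rs : MvPolynomial ↥S k × MvPolynomial ↥S k,
      q.coeff i = MvPolynomial.aeval Subtype.val rs.1 / MvPolynomial.aeval Subtype.val rs.2 := by
    intro i
    obtain ⟨r', s', h'⟩ := (IntermediateField.mem_adjoin_iff k (q.coeff i)).mp (hmem i)
    exact ⟨(r', s'), h'⟩
  choose rs hrs using hmem'
  have hden_ne : ∀ i ∈ q.support, MvPolynomial.aeval (Subtype.val : S → F) (rs i).2 ≠ 0 := by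
    intro i hi hzero
    apply Polynomial.mem_support_iff.mp hi
    rw [hrs i, hzero, div_zero]
  have hd0 : (∏ i ∈ q.support, MvPolynomial.aeval (Subtype.val : S → F) (rs i).2) ≠ 0 :=
    Finset.prod_ne_zero_iff.mpr hden_ne
  refine ⟨Polynomial.C (∏ i ∈ q.support, MvPolynomial.aeval (Subtype.val : S → F) (rs i).2) * q,
    mul_ne_zero (Polynomial.C_ne_zero.mpr hd0) hq0, ?_, by rw [Polynomial.eval_mul, hqx, mul_zero]⟩
  intro i
  rw [range_subalg, Polynomial.coeff_C_mul]
  by_cases hi : i ∈ q.support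
  · have key : (∏ j ∈ q.support, MvPolynomial.aeval (Subtype.val : S → F) (rs j).2) * q.coeff i
        = (∏ j ∈ q.support.erase i, MvPolynomial.aeval (Subtype.val : S → F) (rs j).2)
          * MvPolynomial.aeval (Subtype.val : S → F) (rs i).1 := by
      rw [hrs i, ← Finset.mul_prod_erase _ _ hi]
      have := hden_ne i hi
      field_simp
    rw [key]
    exact mul_mem (prod_mem fun j _ => haux _) (haux _)
  · rw [Polynomial.notMem_support_iff.mp hi, mul_zero]
    exact zero_mem _

open MvPolynomial in
lemma main_lemma {k F : Type*} [Field k] [Field F] [Algebra k F] {r : ℕ} (u : Fin r → F) :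
    ∀ (s : ℕ) (v : Fin s → F), AlgebraicIndependent k (Sum.elim u v) →
    ∀ Q : MvPolynomial (Fin s) F, Q ≠ 0 →
    (∀ m, IsAlgebraic ↥(Algebra.adjoin k (Set.range u)) (Q.coeff m)) →
    MvPolynomial.eval v Q ≠ 0 := by
  intro s
  induction s with
  | zero =>
    intro v _ Q hQ0 _
    obtain ⟨c, rfl⟩ := MvPolynomial.C_surjective (Fin 0) Q
    rw [MvPolynomial.eval_C]
    intro h
    exact hQ0 (by rw [h, map_zero])
  | succ s ih =>
    intro v huv Q hQ0 hco heval
    set v' : Fin s → F := v ∘ Fin.succ with hv'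
    -- independence of u with v'
    have hmapinj : Function.Injective (Sum.map (id : Fin r → Fin r) (Fin.succ : Fin s → Fin (s+1))) := by
      rintro (a | a) (b | b) h <;> simp_all [Fin.succ_inj]
    have hcompeq : (Sum.elim u v) ∘ (Sum.map id Fin.succ) = Sum.elim u v' := by
      funext x; rcases x with a | a <;> rfl
    have huv' : AlgebraicIndependent k (Sum.elim u v') := by
      have := huv.comp _ hmapinj
      rwa [hcompeq] at this
    -- the polynomial in the last variable
    set W := MvPolynomial.finSuccEquiv F s Q with hW
    have hW0 : W ≠ 0 := fun h => hQ0 ((MvPolynomial.finSuccEquiv F s).injective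
      (by rw [← hW, h, map_zero]))
    have hWt : ∀ t : ℕ, W.coeff t ≠ 0 → MvPolynomial.eval v' (W.coeff t) ≠ 0 := by
      intro t ht
      refine ih v' huv' _ ht (fun m => ?_)
      rw [hW, MvPolynomial.finSuccEquiv_coeff_coeff]
      exact hco _
    set p : Polynomial F := Polynomial.map (MvPolynomial.eval v') W with hp
    have hp0 : p ≠ 0 := by
      obtain ⟨t, ht⟩ : ∃ t, W.coeff t ≠ 0 := by
        by_contra h
        push_neg at h
        exact hW0 (Polynomial.ext fun t => by rw [h, Polynomial.coeff_zero])
      intro h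
      apply hWt t ht
      have := congrArg (fun q => Polynomial.coeff q t) h
      simpa [hp] using this
    have hpx : Polynomial.eval (v 0) p = 0 := by
      have hcons : Fin.cons (v 0) v' = v := Fin.cons_self_tail v
      rw [hp, hW, ← MvPolynomial.eval_eq_eval_mv_eval', hcons]
      exact heval
    -- fields
    set Cset : Set F := Set.range (fun m => Q.coeff m) with hCset
    set E₀ : IntermediateField k F :=
      IntermediateField.adjoin k (Set.range u ∪ Set.range v') with hE₀
    have hadle : Algebra.adjoin k (Set.range u) ≤ E₀.toSubalgebra := by
      rw [Algebra.adjoin_le_iff]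
      exact le_trans Set.subset_union_left (IntermediateField.subset_adjoin k _)
    have hCalg : ∀ c ∈ Cset, IsIntegral ↥E₀ c := by
      rintro c ⟨m, rfl⟩
      rw [← isAlgebraic_iff_isIntegral]
      have hinj1 : Function.Injective (algebraMap ↥(Algebra.adjoin k (Set.range u)) F) :=
        fun a b hab => Subtype.ext hab
      refine transfer hinj1 (algebraMap ↥E₀ F).injective ?_ (hco m)
      rw [range_subalg, range_intfield]
      exact hadle
    set E' : IntermediateField ↥E₀ F := IntermediateField.adjoin ↥E₀ Cset with hE'
    haveI halgE' : Algebra.IsAlgebraic ↥E₀ ↥E' :=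
      IntermediateField.isAlgebraic_adjoin (fun c hc => hCalg c hc)
    -- v 0 is algebraic over E'
    have hv0E' : IsAlgebraic ↥E' (v 0) := by
      rw [helper1 _ (algebraMap ↥E' F).injective]
      refine ⟨p, hp0, fun t => ?_, hpx⟩
      rw [range_intfield]
      have hcoeffmem : ∀ m, (W.coeff t).coeff m ∈ (E' : Set F) := by
        intro m
        rw [hW, MvPolynomial.finSuccEquiv_coeff_coeff]
        exact IntermediateField.subset_adjoin _ _ ⟨_, rfl⟩
      have hvmem : ∀ i, v' i ∈ (E' : Set F) := by
        intro i
        have h1 : v' i ∈ E₀ := IntermediateField.subset_adjoin k _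
          (Set.mem_union_right _ ⟨i, rfl⟩)
        exact IntermediateField.algebraMap_mem E' ⟨v' i, h1⟩
      rw [hp, Polynomial.coeff_map]
      exact MvPolynomial.eval_mem (fun m _ => hcoeffmem m) (fun i => hvmem i)
    -- transitivity down to E₀
    have hv0E₀ : IsAlgebraic ↥E₀ (v 0) := by
      haveI : Algebra.IsIntegral ↥E₀ ↥E' := Algebra.isAlgebraic_iff_isIntegral.mp halgE'
      rw [isAlgebraic_iff_isIntegral] at hv0E' ⊢
      exact isIntegral_trans _ hv0E'
    -- down to the polynomial subalgebra
    have hv0adj : IsAlgebraic ↥(Algebra.adjoin k (Set.range u ∪ Set.range v')) (v 0) :=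
      frac _ _ hv0E₀
    -- contradiction with option independence
    have he : AlgebraicIndependent k (fun o : Option (Fin r ⊕ Fin s) =>
        o.elim (v 0) (Sum.elim u v')) := by
      let e : Option (Fin r ⊕ Fin s) ≃ (Fin r ⊕ Fin (s+1)) :=
        { toFun := fun o => o.elim (Sum.inr 0) (Sum.map id Fin.succ)
          invFun := Sum.elim (fun i => some (Sum.inl i))
            (fun j => Fin.cases none (fun j' => some (Sum.inr j')) j)
          left_inv := by rintro (_ | a | b) <;> simp [Sum.map]
          right_inv := by
            rintro (a | b)
            · rfl
            · induction b using Fin.cases <;> simp [Sum.map] }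
      have := huv.comp e e.injective
      have heq : (Sum.elim u v) ∘ e = fun o : Option (Fin r ⊕ Fin s) =>
          o.elim (v 0) (Sum.elim u v') := by
        funext o
        rcases o with _ | a | b <;> rfl
      rwa [heq] at this
    have htrans := (huv'.option_iff_transcendental (v 0)).mp he
    rw [Set.Sum.elim_range] at htrans
    exact htrans hv0adj

/-- Lemma 2.5.  Let `ν` be a valuation on `K`, trivial on the algebraically closed base
field `k` (i.e. `k` is contained in the valuation ring `R`), and `K' ⊆ K` a subfield
containing `k` with `m_R ∩ K' ≠ 0`.  Suppose `f₁, …, f_r ∈ R ∩ K'` have residues forming a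
transcendence basis of `(R ∩ K')/(m_R ∩ K')` over `k` (viewed inside `R/m_R`: their residues
are algebraically independent, and adjoining the residue of any further element of `R ∩ K'`
destroys independence), and `g₁, …, g_s ∈ R` are such that the residues of the `fᵢ` and `gⱼ`
together are algebraically independent over `k`.  Then `g₁, …, g_s` are algebraically
independent over `K'`. -/
theorem stmt_1 (k K : Type*) [Field k] [IsAlgClosed k] [Field K] [Algebra k K]
    (R : ValuationSubring K) (hk : ∀ a : k, algebraMap k K a ∈ R)
    (K' : Subfield K) (hkK' : ∀ a : k, algebraMap k K a ∈ K')
    (hm : ∃ x : R, x ∈ maximalIdeal R ∧ (x : K) ∈ K' ∧ (x : K) ≠ 0)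
    (r s : ℕ) (f : Fin r → R) (hf : ∀ i, (f i : K) ∈ K') (g : Fin s → R) :
    letI : Algebra k (ResidueField R) :=
      ((residue R).comp ((algebraMap k K).codRestrict R.toSubring hk)).toAlgebra
    letI : Algebra (↥K') K := K'.subtype.toAlgebra
    -- residues of the `fᵢ` are algebraically independent over `k`
    AlgebraicIndependent k (fun i => residue R (f i)) →
    -- and maximally so among residues of elements of `R ∩ K'` (transcendence basis)
    (∀ x : R, (x : K) ∈ K' →
      ¬ AlgebraicIndependent k
        (fun o : Option (Fin r) => o.elim (residue R x) (fun i => residue R (f i)))) →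
    -- the residues of the `fᵢ` and `gⱼ` together are algebraically independent over `k`
    AlgebraicIndependent k
      (Sum.elim (fun i => residue R (f i)) (fun j => residue R (g j))) →
    AlgebraicIndependent (↥K') (fun j => (g j : K)) := by
  letI : Algebra k (ResidueField ↥R) :=
    ((residue ↥R).comp ((algebraMap k K).codRestrict R.toSubring hk)).toAlgebra
  letI : Algebra (↥K') K := K'.subtype.toAlgebra
  intro h1 h2 h3
  rw [algebraicIndependent_iff]
  intro P hPeval
  by_contra hP0
  have hsupp : P.support.Nonempty := MvPolynomial.support_nonempty.mpr hP0
  obtain ⟨m₀, hm₀, hmax⟩ := P.support.exists_max_image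
    (fun m => R.valuation ((P.coeff m : K') : K)) hsupp
  set c₀ : K := ((P.coeff m₀ : K') : K) with hc₀def
  have hc₀ : c₀ ≠ 0 := by
    intro h
    exact MvPolynomial.mem_support_iff.mp hm₀ (by
      rw [hc₀def] at h
      exact_mod_cast h)
  have hle : ∀ m, R.valuation ((P.coeff m : K') : K) ≤ R.valuation c₀ := by
    intro m
    by_cases hmem : m ∈ P.support
    · exact hmax m hmem
    · rw [MvPolynomial.notMem_support_iff.mp hmem]
      simp
  have hval : ∀ m, (((P.coeff m : K') : K) / c₀) ∈ R := by
    intro m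
    apply R.mem_of_valuation_le_one
    rw [map_div₀]
    refine (div_le_one₀ ?_).mpr (hle m)
    rw [zero_lt_iff]
    simpa using hc₀
  set t : (Fin s →₀ ℕ) → R := fun m => ⟨((P.coeff m : K') : K) / c₀, hval m⟩ with ht
  set Q' : MvPolynomial (Fin s) R := ∑ m ∈ P.support, MvPolynomial.monomial m (t m) with hQ'
  have hcoeff : ∀ n, Q'.coeff n = t n := by
    intro n
    rw [hQ', MvPolynomial.coeff_sum]
    simp only [MvPolynomial.coeff_monomial]
    rw [Finset.sum_ite_eq' P.support n t]
    by_cases hn : n ∈ P.support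
    · rw [if_pos hn]
    · rw [if_neg hn]
      apply Subtype.ext
      show (0 : K) = ((P.coeff n : K') : K) / c₀
      rw [MvPolynomial.notMem_support_iff.mp hn]
      simp
  have hQ'm₀ : Q'.coeff m₀ = 1 := by
    rw [hcoeff]
    apply Subtype.ext
    show ((P.coeff m₀ : K') : K) / c₀ = 1
    rw [← hc₀def, div_self hc₀]
  -- the map to K
  set φ : ↥R →+* K := R.subtype with hφ
  have hφinj : Function.Injective φ := Subtype.val_injective
  have hmapQ' : MvPolynomial.map φ Q' =
      MvPolynomial.C c₀⁻¹ * MvPolynomial.map (algebraMap ↥K' K) P := by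
    apply MvPolynomial.ext
    intro n
    rw [MvPolynomial.coeff_map, MvPolynomial.coeff_C_mul, MvPolynomial.coeff_map, hcoeff]
    show ((P.coeff n : K') : K) / c₀ = c₀⁻¹ * (algebraMap ↥K' K (P.coeff n))
    rw [div_eq_mul_inv, mul_comm]
    rfl
  have hevalK : MvPolynomial.eval (fun j => ((g j : K))) (MvPolynomial.map φ Q') = 0 := by
    rw [hmapQ', MvPolynomial.eval_mul, MvPolynomial.eval_C, MvPolynomial.eval_map,
      ← MvPolynomial.aeval_def, hPeval, mul_zero]
  have hevalR : MvPolynomial.eval g Q' = 0 := by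
    apply hφinj
    rw [map_zero]
    have hcomm : φ (MvPolynomial.eval g Q') =
        MvPolynomial.eval (fun j => ((g j : K))) (MvPolynomial.map φ Q') := by
      rw [MvPolynomial.eval_map, ← MvPolynomial.eval₂_id (g := g) Q',
        MvPolynomial.eval₂_comp_left φ (RingHom.id ↥R) g Q']
      rfl
    rw [hcomm, hevalK]
  -- the residue polynomial
  set ρ : ↥R →+* ResidueField ↥R := residue ↥R with hρ
  set Qb : MvPolynomial (Fin s) (ResidueField ↥R) := MvPolynomial.map ρ Q' with hQb
  have hresQ : MvPolynomial.eval (fun j => ρ (g j)) Qb = 0 := by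
    rw [hQb, MvPolynomial.eval_map]
    have hcomm : ρ (MvPolynomial.eval g Q') =
        MvPolynomial.eval₂ ρ (fun j => ρ (g j)) Q' := by
      rw [← MvPolynomial.eval₂_id (g := g) Q',
        MvPolynomial.eval₂_comp_left ρ (RingHom.id ↥R) g Q', RingHom.comp_id]
      rfl
    rw [← hcomm, hevalR, map_zero]
  have hQb0 : Qb ≠ 0 := by
    intro h
    have : Qb.coeff m₀ = 1 := by
      rw [hQb, MvPolynomial.coeff_map, hQ'm₀, map_one]
    rw [h, MvPolynomial.coeff_zero] at this
    exact one_ne_zero this.symm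
  have hcalg : ∀ m, IsAlgebraic
      ↥(Algebra.adjoin k (Set.range (fun i => ρ (f i)))) (Qb.coeff m) := by
    intro m
    have hxK' : ((t m : K)) ∈ K' := by
      show (((P.coeff m : K') : K) / c₀) ∈ K'
      exact div_mem (P.coeff m).2 (P.coeff m₀).2
    have hQbm : Qb.coeff m = ρ (t m) := by
      rw [hQb, MvPolynomial.coeff_map, hcoeff]
    rw [hQbm]
    by_contra hna
    exact h2 (t m) hxK' ((h1.option_iff_transcendental (ρ (t m))).mpr hna)
  exact main_lemma (fun i => ρ (f i)) s (fun j => ρ (g j)) h3 Qb hQb0 hcalg hresQ
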